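/- Let 𝔅 be a bornology on the Baire space ω^ω with a compact base. Then ω^ω does not satisfy Ufin(Γ_𝔅, 𝒪_𝔅). Concretely: for the sequence of γ_𝔅-covers 𝒰ₙ = {Uₖⁿ : k ∈ ω} where Uₖⁿ = {f ∈ ω^ω : f(n) ≤ k}, there is no choice of finite 𝒱ₙ ⊆ 𝒰ₙ such that {∪𝒱ₙ : n ∈ ω} is an open 𝔅-cover of ω^ω. -/

import Mathlib

open Set

universe u

def IsBornology {X : Type u} (B : Set (Set X)) : Prop :=
  ⋃₀ B = univ ∧ (∀ b ∈ B, ∀ b' ⊆ b, b' ∈ B) ∧ ∀ b ∈ B, ∀ b' ∈ B, b ∪ b' ∈ B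

def HasClosedBase {X : Type u} [TopologicalSpace X] (B : Set (Set X)) : Prop :=
  ∃ B0 ⊆ B, (∀ b ∈ B0, IsClosed b) ∧ ∀ b ∈ B, ∃ b0 ∈ B0, b ⊆ b0

def HasCompactBase {X : Type u} [TopologicalSpace X] (B : Set (Set X)) : Prop :=
  ∃ B0 ⊆ B, (∀ b ∈ B0, IsCompact b) ∧ ∀ b ∈ B, ∃ b0 ∈ B0, b ⊆ b0

def IsBCover {X : Type u} [TopologicalSpace X] (B U : Set (Set X)) : Prop :=
  (∀ u ∈ U, IsOpen u) ∧ univ ∉ U ∧ ∀ b ∈ B, ∃ u ∈ U, b ⊆ u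

def IsGammaBCover {X : Type u} [TopologicalSpace X] (B U : Set (Set X)) : Prop :=
  U.Infinite ∧ (∀ u ∈ U, IsOpen u ∧ u ≠ univ) ∧ ∀ b ∈ B, {u ∈ U | ¬ b ⊆ u}.Finite

def IsOpenCover {X : Type u} [TopologicalSpace X] (U : Set (Set X)) : Prop :=
  (∀ u ∈ U, IsOpen u) ∧ ⋃₀ U = univ

def IsOmegaCover {X : Type u} [TopologicalSpace X] (U : Set (Set X)) : Prop :=
  (∀ u ∈ U, IsOpen u) ∧ univ ∉ U ∧ ∀ F : Set X, F.Finite → ∃ u ∈ U, F ⊆ u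

def IsGammaCover {X : Type u} [TopologicalSpace X] (U : Set (Set X)) : Prop :=
  U.Infinite ∧ (∀ u ∈ U, IsOpen u) ∧ ∀ x : X, {u ∈ U | x ∉ u}.Finite

def BLindelof {X : Type u} [TopologicalSpace X] (B : Set (Set X)) : Prop :=
  ∀ U, IsBCover B U → ∃ V ⊆ U, V.Countable ∧ IsBCover B V

def S1 {X : Type u} (A C : Set (Set X) → Prop) : Prop :=
  ∀ U : ℕ → Set (Set X), (∀ n, A (U n)) →
    ∃ V : ℕ → Set X, (∀ n, V n ∈ U n) ∧ C (Set.range V)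

def Sfin {X : Type u} (A C : Set (Set X) → Prop) : Prop :=
  ∀ U : ℕ → Set (Set X), (∀ n, A (U n)) →
    ∃ V : ℕ → Set (Set X), (∀ n, (V n).Finite ∧ V n ⊆ U n) ∧ C (⋃ n, V n)

def Ufin {X : Type u} (A C : Set (Set X) → Prop) : Prop :=
  ∀ U : ℕ → Set (Set X), (∀ n, A (U n)) →
    ∃ V : ℕ → Set (Set X), (∀ n, (V n).Finite ∧ V n ⊆ U n) ∧
      ((∃ n, ⋃₀ V n = univ) ∨ C {s | ∃ n, s = ⋃₀ V n})
lemma Uk_inj (n : ℕ) : Function.Injective (fun k => {f : ℕ → ℕ | f n ≤ k}) := by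
  intro k k' h
  simp only [Set.ext_iff, Set.mem_setOf_eq] at h
  exact le_antisymm ((h fun _ => k).1 (le_refl k)) ((h fun _ => k').2 (le_refl k'))

lemma Uk_ne_univ (n k : ℕ) : {f : ℕ → ℕ | f n ≤ k} ≠ univ := by
  intro h
  have : (fun _ => k + 1 : ℕ → ℕ) ∈ {f : ℕ → ℕ | f n ≤ k} := h ▸ mem_univ _
  simp at this

lemma gamma_cover (B : Set (Set (ℕ → ℕ))) (hc : HasCompactBase B) (n : ℕ) :
    IsGammaBCover B (Set.range fun k => {f : ℕ → ℕ | f n ≤ k}) := by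
  obtain ⟨B0, hB0B, hB0c, hbase⟩ := hc
  refine ⟨Set.infinite_range_of_injective (Uk_inj n), ?_, ?_⟩
  · rintro u ⟨k, rfl⟩
    refine ⟨?_, Uk_ne_univ n k⟩
    show IsOpen {f : ℕ → ℕ | f n ≤ k}
    exact (isOpen_discrete (Set.Iic k)).preimage (continuous_apply (A := fun _ : ℕ => ℕ) n)
  · intro b hb
    obtain ⟨b0, hb0, hbb0⟩ := hbase b hb
    have hfin : ((fun f : ℕ → ℕ => f n) '' b0).Finite :=
      ((hB0c b0 hb0).image (continuous_apply n)).finite_of_discrete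
    obtain ⟨K, hK⟩ := hfin.bddAbove
    have hsub : {u ∈ Set.range (fun k => {f : ℕ → ℕ | f n ≤ k}) | ¬ b ⊆ u} ⊆
        (fun k => {f : ℕ → ℕ | f n ≤ k}) '' (Set.Iio K) := by
      rintro u ⟨⟨k, rfl⟩, hnb⟩
      refine ⟨k, ?_, rfl⟩
      by_contra hk
      simp only [Set.mem_Iio, not_lt] at hk
      exact hnb fun f hf => le_trans (hK ⟨f, hbb0 hf, rfl⟩) hk
    exact ((Set.finite_Iio K).image _).subset hsub

theorem stmt8 (B : Set (Set (ℕ → ℕ))) (hB : IsBornology B) (hc : HasCompactBase B) :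
    ¬ Ufin (IsGammaBCover B) (IsBCover B) ∧
    ¬ ∃ V : ℕ → Set (Set (ℕ → ℕ)),
        (∀ n, (V n).Finite ∧ V n ⊆ Set.range fun k => {f : ℕ → ℕ | f n ≤ k}) ∧
        IsBCover B {s | ∃ n, s = ⋃₀ V n} := by
  obtain ⟨hcov, hdown, -⟩ := hB
  have key : ∀ V : ℕ → Set (Set (ℕ → ℕ)),
      (∀ n, (V n).Finite ∧ V n ⊆ Set.range fun k => {f : ℕ → ℕ | f n ≤ k}) →
      ∃ g : ℕ → ℕ, ∀ n, g ∉ ⋃₀ V n := by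
    intro V hV
    have hT : ∀ n, {k | {f : ℕ → ℕ | f n ≤ k} ∈ V n}.Finite := fun n =>
      Set.Finite.preimage (Set.injOn_of_injective (Uk_inj n)) (hV n).1
    choose K hK using fun n => (hT n).bddAbove
    refine ⟨fun n => K n + 1, ?_⟩
    rintro n ⟨s, hs, hgs⟩
    obtain ⟨k, rfl⟩ := (hV n).2 hs
    have hkK : k ≤ K n := hK n hs
    simp only [Set.mem_setOf_eq] at hgs
    omega
  have hsingleton : ∀ g : ℕ → ℕ, {g} ∈ B := by
    intro g
    have : g ∈ ⋃₀ B := hcov ▸ mem_univ g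
    obtain ⟨b, hb, hgb⟩ := this
    exact hdown b hb {g} (Set.singleton_subset_iff.mpr hgb)
  have hsecond : ¬ ∃ V : ℕ → Set (Set (ℕ → ℕ)),
      (∀ n, (V n).Finite ∧ V n ⊆ Set.range fun k => {f : ℕ → ℕ | f n ≤ k}) ∧
      IsBCover B {s | ∃ n, s = ⋃₀ V n} := by
    rintro ⟨V, hV, -, -, hcover⟩
    obtain ⟨g, hg⟩ := key V hV
    obtain ⟨u, ⟨n, rfl⟩, hbu⟩ := hcover {g} (hsingleton g)
    exact hg n (hbu rfl)
  refine ⟨?_, hsecond⟩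
  intro hufin
  obtain ⟨V, hV, hcase⟩ := hufin (fun n => Set.range fun k => {f : ℕ → ℕ | f n ≤ k})
    (fun n => gamma_cover B hc n)
  rcases hcase with ⟨n, hn⟩ | hC
  · obtain ⟨g, hg⟩ := key V hV
    exact hg n (hn ▸ mem_univ g)
  · exact hsecond ⟨V, hV, hC⟩
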